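/- Let B ≥ 2 be an integer, let β > 0, c > 0, and λ ∈ (0, 1) be real, and set α = −(B − 1)·log_B λ > 0. Let k : ℕ → ℝ satisfy k(m) ≥ c·λ^(s_B(m)) ≥ 0 for all m ≥ 1. Suppose C : ℕ → ℝ satisfies C(1) > 0 and C(n) = β·∑_{j=1}^{n−1} k(n−j)·C(j) for all n ≥ 2. Then C(n) ≥ 0 for all n ≥ 1, and for every n ≥ 2, C(n) ≥ β·C(1)·c·λ^(B−1)·(n − 1)^(−α), where (n−1)^(−α) is a real power. In particular, C(n) = Ω(n^(−α)): the first-order connected correlator of the linearized dilated RNN is bounded below by a power law in the lag. (This is the paper's main analytical claim for dilated RNNs.) -/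

import Mathlib

/-- **Power-law lower bound for the dilated RNN first-order correlator.** Let `B ≥ 2`,
`β > 0`, `c > 0`, `0 < λ < 1`, and `α = −(B − 1)·log_B λ`. If the lag kernel satisfies
`k m ≥ c · λ^(s_B(m)) ≥ 0` for all `m ≥ 1`, and `C` satisfies `C 1 > 0` together with
the first-order recursion `C n = β ∑_{j=1}^{n−1} k (n−j) C j` for `n ≥ 2`, then
`C n ≥ 0` for all `n ≥ 1`, and for every `n ≥ 2`,
`C n ≥ β · C 1 · c · λ^(B−1) · (n − 1)^(−α)`. -/
theorem dilated_correlator_power_law_lower_bound (B : ℕ) (hB : 2 ≤ B)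
    (β c lam : ℝ) (hβ : 0 < β) (hc : 0 < c) (h0 : 0 < lam) (h1 : lam < 1)
    (α : ℝ) (hα : α = -(((B : ℝ) - 1) * Real.logb B lam))
    (k : ℕ → ℝ)
    (hk : ∀ m, 1 ≤ m →
      c * lam ^ (Nat.digits B m).sum ≤ k m ∧ 0 ≤ c * lam ^ (Nat.digits B m).sum)
    (Cs : ℕ → ℝ) (hC1 : 0 < Cs 1)
    (hrec : ∀ n, 2 ≤ n → Cs n = β * ∑ j ∈ Finset.Ico 1 n, k (n - j) * Cs j) :
    (∀ n, 1 ≤ n → 0 ≤ Cs n) ∧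
    ∀ n, 2 ≤ n →
      Cs n ≥ β * Cs 1 * c * lam ^ (B - 1) * ((n : ℝ) - 1) ^ (-α) := by
  have hB1 : (1 : ℝ) < (B : ℝ) := by exact_mod_cast hB.trans_lt' one_lt_two
  have hlogB : 0 < Real.log B := Real.log_pos hB1
  -- nonnegativity of k on m ≥ 1
  have hknn : ∀ m, 1 ≤ m → 0 ≤ k m := fun m hm => (hk m hm).2.trans (hk m hm).1
  -- nonnegativity of Cs
  have hnn : ∀ n, 1 ≤ n → 0 ≤ Cs n := by
    intro n
    induction n using Nat.strong_induction_on with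
    | _ n ih =>
      intro hn
      rcases eq_or_lt_of_le hn with h | h
      · rw [← h]; exact hC1.le
      · have h2 : 2 ≤ n := h
        rw [hrec n h2]
        refine mul_nonneg hβ.le (Finset.sum_nonneg ?_)
        intro j hj
        rw [Finset.mem_Ico] at hj
        exact mul_nonneg (hknn _ (by omega)) (ih j (by omega) hj.1)
  refine ⟨hnn, ?_⟩
  -- key digit-sum bound : lam ^ (B-1) * m^(-α) ≤ lam ^ s_B(m)
  have key : ∀ m : ℕ, 1 ≤ m →
      lam ^ (B - 1) * (m : ℝ) ^ (-α) ≤ lam ^ (Nat.digits B m).sum := by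
    intro m hm
    have hm0 : m ≠ 0 := by omega
    have hmR : (0 : ℝ) < (m : ℝ) := by exact_mod_cast hm
    -- digit sum bound
    have hlen : (Nat.digits B m).length = Nat.log B m + 1 :=
      Nat.digits_len B m (by omega) hm0
    have hs : (Nat.digits B m).sum ≤ (B - 1) * (Nat.log B m + 1) := by
      calc (Nat.digits B m).sum ≤ (Nat.digits B m).length * (B - 1) := by
            simpa [smul_eq_mul] using
              List.sum_le_card_nsmul (Nat.digits B m) (B - 1)
                (fun x hx => by
                  have := Nat.digits_lt_base (by omega) hx
                  omega)
        _ = (B - 1) * (Nat.log B m + 1) := by rw [hlen]; ring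
    have step1 : lam ^ ((B - 1) * (Nat.log B m + 1)) ≤ lam ^ (Nat.digits B m).sum :=
      pow_le_pow_of_le_one h0.le h1.le hs
    -- rewrite LHS
    have hsplit : lam ^ ((B - 1) * (Nat.log B m + 1))
        = lam ^ (B - 1) * lam ^ ((B - 1) * Nat.log B m) := by
      rw [← pow_add]; ring_nf
    -- m^(-α) = lam ^ ((B-1) * logb B m)  (rpow)
    have heq : (m : ℝ) ^ (-α) = lam ^ (((B : ℝ) - 1) * Real.logb B m) := by
      rw [Real.rpow_def_of_pos hmR, Real.rpow_def_of_pos h0]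
      congr 1
      rw [hα, Real.logb, Real.logb]
      field_simp
    -- exponent comparison
    have hBcast : (((B - 1 : ℕ)) : ℝ) = (B : ℝ) - 1 := by
      push_cast [Nat.cast_sub (by omega : 1 ≤ B)]; ring
    have hexp : (((B - 1) * Nat.log B m : ℕ) : ℝ) ≤ ((B : ℝ) - 1) * Real.logb B m := by
      push_cast
      rw [hBcast]
      exact mul_le_mul_of_nonneg_left (Real.natLog_le_logb m B) (by linarith)
    have step2 : (m : ℝ) ^ (-α) ≤ lam ^ ((B - 1) * Nat.log B m) := by
      rw [heq, ← Real.rpow_natCast lam ((B - 1) * Nat.log B m)]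
      exact Real.rpow_le_rpow_of_exponent_ge h0 h1.le hexp
    calc lam ^ (B - 1) * (m : ℝ) ^ (-α)
        ≤ lam ^ (B - 1) * lam ^ ((B - 1) * Nat.log B m) :=
          mul_le_mul_of_nonneg_left step2 (pow_nonneg h0.le _)
      _ = lam ^ ((B - 1) * (Nat.log B m + 1)) := hsplit.symm
      _ ≤ lam ^ (Nat.digits B m).sum := step1
  -- main bound
  intro n hn
  have hmem : 1 ∈ Finset.Ico 1 n := Finset.mem_Ico.mpr ⟨le_refl 1, by omega⟩
  have hsum : k (n - 1) * Cs 1 ≤ ∑ j ∈ Finset.Ico 1 n, k (n - j) * Cs j :=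
    Finset.single_le_sum (fun j hj => by
      rw [Finset.mem_Ico] at hj
      have : 1 ≤ n - j := by omega
      exact mul_nonneg (hknn _ this) (hnn j hj.1)) hmem
  have hk1 := (hk (n - 1) (by omega)).1
  have hkey := key (n - 1) (by omega)
  have hcast : ((n - 1 : ℕ) : ℝ) = (n : ℝ) - 1 := by
    have : 1 ≤ n := by omega
    push_cast [Nat.cast_sub this]
    ring
  rw [hrec n hn]
  calc β * ∑ j ∈ Finset.Ico 1 n, k (n - j) * Cs j
      ≥ β * (k (n - 1) * Cs 1) := by
        exact mul_le_mul_of_nonneg_left hsum hβ.le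
    _ ≥ β * ((c * lam ^ (Nat.digits B (n - 1)).sum) * Cs 1) := by
        apply mul_le_mul_of_nonneg_left _ hβ.le
        exact mul_le_mul_of_nonneg_right hk1 hC1.le
    _ ≥ β * ((c * (lam ^ (B - 1) * ((n - 1 : ℕ) : ℝ) ^ (-α))) * Cs 1) := by
        apply mul_le_mul_of_nonneg_left _ hβ.le
        apply mul_le_mul_of_nonneg_right _ hC1.le
        exact mul_le_mul_of_nonneg_left hkey hc.le
    _ = β * Cs 1 * c * lam ^ (B - 1) * ((n : ℝ) - 1) ^ (-α) := by
        rw [hcast]; ring
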